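/- For every binary word w of length k ≥ 1 and every n ≥ 0, the number of binary words of length n that avoid w equals Σ_{j=0}^{k−1} binom(n, j). In particular this count is independent of the choice of w. -/
import Mathlib

private lemma avoid_finite (n : ℕ) (P : List Bool → Prop) :
    {v : List Bool | v.length = n ∧ P v}.Finite :=
  (List.finite_length_eq Bool n).subset (fun _ h => h.1)

private lemma sum_choose_succ (k n : ℕ) :
    ∑ j ∈ Finset.range (k+1), (n+1).choose j =
      ∑ j ∈ Finset.range k, n.choose j + ∑ j ∈ Finset.range (k+1), n.choose j := by
  induction k with
  | zero => simp
  | succ k ih =>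
    have h : (n+1).choose (k+1) = n.choose k + n.choose (k+1) := by
      rw [Nat.choose_succ_succ]
    simp only [Finset.sum_range_succ]
    simp only [Finset.sum_range_succ] at ih
    omega

private lemma key (n : ℕ) : ∀ w : List Bool,
    {v : List Bool | v.length = n ∧ ¬ w.Sublist v}.ncard =
      ∑ j ∈ Finset.range w.length, n.choose j := by
  induction n with
  | zero =>
    intro w
    cases w with
    | nil =>
      simp only [List.nil_sublist, not_true, and_false]
      simp
    | cons a w' =>
      have hset : {v : List Bool | v.length = 0 ∧ ¬ (a :: w').Sublist v} = {[]} := by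
        ext v
        simp only [Set.mem_setOf_eq, Set.mem_singleton_iff, List.length_eq_zero_iff]
        constructor
        · exact fun h => h.1
        · rintro rfl; simp
      rw [hset, Set.ncard_singleton, List.length_cons, Finset.sum_range_succ']
      simp
  | succ n ih =>
    intro w
    cases w with
    | nil =>
      simp only [List.nil_sublist, not_true, and_false]
      simp
    | cons a w' =>
      set A := {v : List Bool | v.length = n ∧ ¬ w'.Sublist v} with hA
      set B := {v : List Bool | v.length = n ∧ ¬ (a :: w').Sublist v} with hB
      have hsplit : {v : List Bool | v.length = n + 1 ∧ ¬ (a :: w').Sublist v} =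
          (List.cons a '' A) ∪ (List.cons (!a) '' B) := by
        ext v
        constructor
        · rintro ⟨hlen, hsub⟩
          cases v with
          | nil => simp at hlen
          | cons b v' =>
            have hlen' : v'.length = n := by simpa using hlen
            rcases Bool.eq_or_eq_not b a with rfl | rfl
            · left
              refine ⟨v', ⟨hlen', fun h => hsub ?_⟩, rfl⟩
              exact List.cons_sublist_cons.mpr h
            · right
              refine ⟨v', ⟨hlen', fun h => hsub ?_⟩, rfl⟩
              exact h.cons _
        · rintro (⟨v', ⟨hlen, hsub⟩, rfl⟩ | ⟨v', ⟨hlen, hsub⟩, rfl⟩)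
          · refine ⟨by simp [hlen], fun h => hsub ?_⟩
            exact List.cons_sublist_cons.mp h
          · refine ⟨by simp [hlen], fun h => hsub ?_⟩
            rcases List.cons_sublist_cons'.mp h with h' | ⟨heq, _⟩
            · exact h'
            · simp at heq
      rw [hsplit]
      have hinj : ∀ c : Bool, Function.Injective (List.cons c) := by
        intro c x y h; injection h
      have hdisj : Disjoint (List.cons a '' A) (List.cons (!a) '' B) := by
        rw [Set.disjoint_left]
        rintro v ⟨x, _, rfl⟩ ⟨y, _, hy⟩
        injection hy with h1 _
        simp at h1
      rw [Set.ncard_union_eq hdisj ((avoid_finite n _).image _) ((avoid_finite n _).image _),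
        Set.ncard_image_of_injective _ (hinj a), Set.ncard_image_of_injective _ (hinj (!a)),
        ih w', ih (a :: w')]
      rw [List.length_cons, sum_choose_succ]

theorem count_words_avoiding_pattern (k n : ℕ) (hk : 1 ≤ k) (w : List Bool)
    (hw : w.length = k) :
    {v : List Bool | v.length = n ∧ ¬ w.Sublist v}.ncard =
      ∑ j ∈ Finset.range k, n.choose j := by
  rw [key n w, hw]
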